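/- Descent lemma for proximal DCA steps with numerical active sets: Suppose g : R^n -> R is convex differentiable, each psi_i is convex differentiable, h = max_{i in I} psi_i, and F = g - h. Fix x^k, epsilon_k >= 0, the epsilon-active set A_k = {i : h(x^k) - psi_i(x^k) <= epsilon_k}, a vector v^k in the convex hull of {grad psi_i(x^k) : i in A_k}, and sigma >= 0 such that q_k(x) := g(x) - <v^k, x - x^k> + (sigma/2)||x - x^k||^2 is mu-strongly convex for some mu > 0. If x^{k+1} minimizes q_k, then F(x^{k+1}) <= F(x^k) + epsilon_k - (mu/2)||x^{k+1} - x^k||^2. -/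

import Mathlib

open scoped RealInnerProductSpace

/-- First-order condition for a convex function with a gradient. -/
lemma grad_ineq_aux {E : Type*} [NormedAddCommGroup E] [InnerProductSpace ℝ E] [CompleteSpace E]
    {f : E → ℝ} (hconv : ConvexOn ℝ Set.univ f) {x v y : E}
    (hf : HasGradientAt f v x) : f x + ⟪v, y - x⟫ ≤ f y := by
  set φ : ℝ → ℝ := fun t => f (x + t • (y - x)) with hφ
  have hc : HasDerivAt (fun t : ℝ => x + t • (y - x)) (y - x) 0 := by
    simpa using ((hasDerivAt_id (0:ℝ)).smul_const (y - x)).const_add x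
  have hder : HasDerivAt φ ⟪v, y - x⟫ 0 := by
    have hfd : HasFDerivAt f ((InnerProductSpace.toDual ℝ E) v) (x + (0:ℝ) • (y - x)) := by
      simpa using hf.hasFDerivAt
    have := hfd.comp_hasDerivAt 0 hc
    simpa [hφ, Function.comp_def, InnerProductSpace.toDual_apply_apply] using this
  have hslope : Filter.Tendsto (slope φ 0) (nhdsWithin 0 (Set.Ioi (0:ℝ)))
      (nhds ⟪v, y - x⟫) := by
    have := hasDerivAt_iff_tendsto_slope.mp hder
    exact this.mono_left (nhdsWithin_mono _ (fun t ht => ne_of_gt ht))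
  have hbound : ∀ᶠ t in nhdsWithin 0 (Set.Ioi (0:ℝ)), slope φ 0 t ≤ f y - f x := by
    filter_upwards [Ioc_mem_nhdsGT_of_mem (Set.mem_Ico.mpr ⟨le_refl 0, zero_lt_one⟩)]
      with t ht
    have h1 : φ t ≤ (1 - t) * φ 0 + t * φ 1 := by
      have := hconv.2 (Set.mem_univ x) (Set.mem_univ y)
        (sub_nonneg.mpr ht.2) (le_of_lt ht.1) (by ring)
      have heq : (1 - t) • x + t • y = x + t • (y - x) := by
        rw [smul_sub]; module
      have heq1 : x + (1:ℝ) • (y - x) = y := by module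
      simpa [hφ, heq, heq1, smul_eq_mul] using this
    have h0 : φ 0 = f x := by simp [hφ]
    have h1' : φ 1 = f y := by
      have : x + (1:ℝ) • (y - x) = y := by module
      simp [hφ, this]
    rw [slope_def_field, sub_zero, div_le_iff₀ ht.1, h0]
    rw [h0, h1'] at h1
    nlinarith [h1]
  have := le_of_tendsto hslope hbound
  linarith

theorem stmt_4 {n : ℕ} {ι : Type*} [Fintype ι] [Nonempty ι]
    (g : EuclideanSpace ℝ (Fin n) → ℝ) (ψ : ι → EuclideanSpace ℝ (Fin n) → ℝ)
    (hgconv : ConvexOn ℝ Set.univ g) (hgdiff : Differentiable ℝ g)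
    (hψconv : ∀ i, ConvexOn ℝ Set.univ (ψ i)) (hψdiff : ∀ i, Differentiable ℝ (ψ i))
    (h F : EuclideanSpace ℝ (Fin n) → ℝ)
    (hdef : ∀ y, h y = Finset.univ.sup' Finset.univ_nonempty (fun i => ψ i y))
    (hFdef : ∀ y, F y = g y - h y)
    (xk : EuclideanSpace ℝ (Fin n)) (εk : ℝ) (hεk : 0 ≤ εk)
    (gradψ : ι → EuclideanSpace ℝ (Fin n))
    (hψgrad : ∀ i, HasGradientAt (ψ i) (gradψ i) xk)
    (Ak : Finset ι) (hAk : ∀ i, i ∈ Ak ↔ h xk - ψ i xk ≤ εk)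
    (vk : EuclideanSpace ℝ (Fin n))
    (hvk : vk ∈ convexHull ℝ (gradψ '' {i | i ∈ Ak}))
    (σ μ : ℝ) (hσ : 0 ≤ σ) (hμ : 0 < μ)
    (qk : EuclideanSpace ℝ (Fin n) → ℝ)
    (hqk : ∀ y, qk y = g y - ⟪vk, y - xk⟫ + σ / 2 * ‖y - xk‖ ^ 2)
    (hstrong : StrongConvexOn Set.univ μ qk)
    (xk1 : EuclideanSpace ℝ (Fin n)) (hmin : IsMinOn qk Set.univ xk1) :
    F xk1 ≤ F xk + εk - μ / 2 * ‖xk1 - xk‖ ^ 2 := by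
  set d := xk1 - xk with hd
  set c := ‖xk1 - xk‖ ^ 2 with hc
  have hcnn : 0 ≤ c := by positivity
  -- Step A: strong convexity at the minimizer
  have stepA : qk xk1 + μ / 2 * c ≤ qk xk := by
    have key : ∀ t : ℝ, t ∈ Set.Ioc (0:ℝ) 1 →
        qk xk1 + (1 - t) * (μ / 2 * c) ≤ qk xk := by
      intro t ht
      have hsc := hstrong.2 (Set.mem_univ xk) (Set.mem_univ xk1)
        (le_of_lt ht.1) (sub_nonneg.mpr ht.2) (by ring)
      have hmin' : qk xk1 ≤ qk (t • xk + (1 - t) • xk1) :=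
        hmin (Set.mem_univ _)
      have hnorm : ‖xk - xk1‖ ^ 2 = c := by rw [hc, norm_sub_rev]
      have := hmin'.trans hsc
      simp only [smul_eq_mul, hnorm] at this
      nlinarith [ht.1, this]
    have htend : Filter.Tendsto (fun t : ℝ => qk xk1 + (1 - t) * (μ / 2 * c))
        (nhdsWithin 0 (Set.Ioi (0:ℝ))) (nhds (qk xk1 + μ / 2 * c)) := by
      have : Filter.Tendsto (fun t : ℝ => qk xk1 + (1 - t) * (μ / 2 * c))
          (nhds 0) (nhds (qk xk1 + (1 - 0) * (μ / 2 * c))) := by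
        apply Filter.Tendsto.add tendsto_const_nhds
        exact (((continuous_const.sub continuous_id).mul continuous_const).tendsto 0)
      simpa using this.mono_left nhdsWithin_le_nhds
    refine le_of_tendsto htend ?_
    filter_upwards [Ioc_mem_nhdsGT_of_mem (Set.mem_Ico.mpr ⟨le_refl 0, zero_lt_one⟩)]
      with t ht using key t ht
  -- Step B/C: bound the inner product via the convex hull
  have stepC : ⟪vk, d⟫ ≤ h xk1 - h xk + εk := by
    have hinner : ⟪vk, d⟫ = ⟪d, vk⟫ := real_inner_comm _ _
    have hconvset : Convex ℝ {y : EuclideanSpace ℝ (Fin n) | ⟪d, y⟫ ≤ h xk1 - h xk + εk} := by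
      apply convex_halfSpace_le
      exact ⟨fun a b => inner_add_right _ _ _, fun r x => real_inner_smul_right _ _ _⟩
    have hsubset : gradψ '' {i | i ∈ Ak} ⊆
        {y : EuclideanSpace ℝ (Fin n) | ⟪d, y⟫ ≤ h xk1 - h xk + εk} := by
      rintro _ ⟨i, hi, rfl⟩
      have hi' : h xk - ψ i xk ≤ εk := (hAk i).mp hi
      have hgrad := grad_ineq_aux (hψconv i) (hψgrad i) (y := xk1)
      have hsup : ψ i xk1 ≤ h xk1 := by
        rw [hdef]; exact Finset.le_sup' (fun j => ψ j xk1) (Finset.mem_univ i)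
      have : ⟪d, gradψ i⟫ = ⟪gradψ i, xk1 - xk⟫ := real_inner_comm _ _
      rw [Set.mem_setOf_eq, this]
      linarith
    have := convexHull_min hsubset hconvset hvk
    rw [hinner]; exact this
  -- Step D: assemble
  have hq1 : qk xk1 = g xk1 - ⟪vk, d⟫ + σ / 2 * c := by rw [hqk]
  have hq0 : qk xk = g xk := by simp [hqk]
  have hσc : 0 ≤ σ / 2 * c := by positivity
  rw [hFdef, hFdef]
  rw [hq1, hq0] at stepA
  linarith
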